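/- Let A be the n×n matrix with A_{jl} = a_{min(j,l)}. Then the t-th leading principal minor of A equals a_1 · Π_{l=2}^t (a_l - a_{l-1}). -/

import Mathlib

open Finset

theorem min_structured_matrix_det (t : ℕ) (ht : 1 ≤ t) (a : ℕ → ℝ) :
    (Matrix.of fun j l : Fin t => a (min (j : ℕ) (l : ℕ) + 1)).det
      = a 1 * ∏ l ∈ Icc 2 t, (a l - a (l - 1)) := by
  classical
  set d : ℕ → ℝ := fun n => if n = 0 then a 1 else a (n + 1) - a n with hd
  have hsum : ∀ m : ℕ, ∑ k ∈ range (m + 1), d k = a (m + 1) := by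
    intro m
    induction m with
    | zero => simp [hd]
    | succ m ih =>
      rw [Finset.sum_range_succ, ih]
      simp [hd]
  set L : Matrix (Fin t) (Fin t) ℝ := fun j k => if (k : ℕ) ≤ (j : ℕ) then 1 else 0 with hL
  have hA : (Matrix.of fun j l : Fin t => a (min (j : ℕ) (l : ℕ) + 1))
      = L * Matrix.diagonal (fun k : Fin t => d k) * L.transpose := by
    ext j l
    simp only [Matrix.mul_apply, Matrix.diagonal, Matrix.transpose_apply, Matrix.of_apply]
    have key : ∀ k : Fin t, (∑ x : Fin t, L j x * (if x = k then d x else 0)) * L l k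
        = if (k : ℕ) ≤ min (j : ℕ) (l : ℕ) then d k else 0 := by
      intro k
      rw [Finset.sum_eq_single k]
      · simp [hL, le_min_iff]
        split_ifs with h1 h2 h3 h4 <;> simp_all
      · intro b _ hb; simp [hb]
      · intro h; simp at h
    rw [eq_comm, Finset.sum_congr rfl fun k (_ : k ∈ Finset.univ) => key k]
    rw [Fin.sum_univ_eq_sum_range (fun k => if k ≤ min (j : ℕ) (l : ℕ) then d k else 0)]
    have hmin : min (j : ℕ) (l : ℕ) < t := lt_of_le_of_lt (min_le_left _ _) j.isLt
    rw [← hsum (min (j : ℕ) (l : ℕ)), ← Finset.sum_filter]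
    apply Finset.sum_congr _ (fun _ _ => rfl)
    ext k
    simp only [Finset.mem_filter, Finset.mem_range, Nat.lt_succ_iff]
    omega
  rw [hA, Matrix.det_mul, Matrix.det_mul]
  have hLdet : L.det = 1 := by
    rw [Matrix.det_of_lowerTriangular L (fun i j hij => by
      have hij' : (i : ℕ) < (j : ℕ) := hij
      simp [hL, Nat.not_le.mpr hij']
      exact hij)]
    simp [hL]
  have hLtdet : L.transpose.det = 1 := by rw [Matrix.det_transpose, hLdet]
  rw [hLdet, hLtdet, Matrix.det_diagonal, one_mul, mul_one]
  rw [Fin.prod_univ_eq_prod_range (fun k => d k)]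
  obtain ⟨s, rfl⟩ := Nat.exists_eq_add_of_le ht
  rw [Nat.add_comm 1 s, Finset.prod_range_succ', mul_comm]
  congr 1
  rw [show Icc 2 (s + 1) = (range s).image (fun k => k + 2) by
      ext x; simp only [mem_Icc, mem_image, mem_range]; constructor
      · rintro ⟨h1, h2⟩; exact ⟨x - 2, by omega, by omega⟩
      · rintro ⟨k, hk, rfl⟩; omega]
  rw [Finset.prod_image (by intro x _ y _ h; have h' : x + 2 = y + 2 := h; omega)]
  exact Finset.prod_congr rfl fun k _ => rfl
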